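/- Let A be symmetric 3×3 with Ā := (tr(A)I - A)/2 positive definite. For any X in SO(3), 4λ_min(Ā)|X|_I² ≤ tr(A(I - X)) ≤ 4λ_max(Ā)|X|_I², where |X|_I² := tr(I - X)/4. -/

import Mathlib

open Matrix

/-- `Ā = (tr(A)·I - A)/2`. -/
noncomputable def barM (A : Matrix (Fin 3) (Fin 3) ℝ) : Matrix (Fin 3) (Fin 3) ℝ :=
  (1 / 2 : ℝ) • (A.trace • (1 : Matrix (Fin 3) (Fin 3) ℝ) - A)

set_option maxHeartbeats 1000000 in
lemma so3_diag_nonneg (X : Matrix (Fin 3) (Fin 3) ℝ) (hX : Xᵀ * X = 1) (hdet : X.det = 1)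
    (i : Fin 3) : 0 ≤ 1 + 2 * X i i - X.trace := by
  have hXXt : X * Xᵀ = 1 := mul_eq_one_comm.mp hX
  have hadj : X.adjugate = Xᵀ := by
    have hinv : X⁻¹ = Xᵀ := Matrix.inv_eq_right_inv hXXt
    have h2 : X⁻¹ = X.adjugate := by
      rw [Matrix.inv_def, hdet]
      simp
    rw [← h2, hinv]
  rw [Matrix.adjugate_fin_three] at hadj
  have K0 := congrFun (congrFun hadj 0) 0
  have K1 := congrFun (congrFun hadj 1) 1
  have K2 := congrFun (congrFun hadj 2) 2
  simp [Matrix.transpose_apply] at K0 K1 K2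
  have R0 := congrFun (congrFun hXXt 0) 0
  have R1 := congrFun (congrFun hXXt 1) 1
  have R2 := congrFun (congrFun hXXt 2) 2
  simp [Matrix.mul_apply, Fin.sum_univ_three, Matrix.one_apply] at R0 R1 R2
  clear hadj hXXt hX
  have h0 : (0:ℝ) ≤ 1 + 2 * X 0 0 - (X 0 0 + X 1 1 + X 2 2) := by
    have key : 4 * (1 + 2 * X 0 0 - (X 0 0 + X 1 1 + X 2 2)) =
        (1 + X 0 0 - X 1 1 - X 2 2)^2 + (X 2 1 - X 1 2)^2 +
        (X 0 1 + X 1 0)^2 + (X 0 2 + X 2 0)^2 := by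
      linear_combination (-2 : ℝ) * K0 + 2 * K1 + 2 * K2 - R0 - R1 - R2
    nlinarith [sq_nonneg (1 + X 0 0 - X 1 1 - X 2 2), sq_nonneg (X 2 1 - X 1 2),
      sq_nonneg (X 0 1 + X 1 0), sq_nonneg (X 0 2 + X 2 0), key]
  have h1 : (0:ℝ) ≤ 1 + 2 * X 1 1 - (X 0 0 + X 1 1 + X 2 2) := by
    have key : 4 * (1 + 2 * X 1 1 - (X 0 0 + X 1 1 + X 2 2)) =
        (1 + X 1 1 - X 0 0 - X 2 2)^2 + (X 0 2 - X 2 0)^2 +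
        (X 0 1 + X 1 0)^2 + (X 1 2 + X 2 1)^2 := by
      linear_combination (2 : ℝ) * K0 - 2 * K1 + 2 * K2 - R0 - R1 - R2
    nlinarith [sq_nonneg (1 + X 1 1 - X 0 0 - X 2 2), sq_nonneg (X 0 2 - X 2 0),
      sq_nonneg (X 0 1 + X 1 0), sq_nonneg (X 1 2 + X 2 1), key]
  have h2 : (0:ℝ) ≤ 1 + 2 * X 2 2 - (X 0 0 + X 1 1 + X 2 2) := by
    have key : 4 * (1 + 2 * X 2 2 - (X 0 0 + X 1 1 + X 2 2)) =
        (1 + X 2 2 - X 0 0 - X 1 1)^2 + (X 1 0 - X 0 1)^2 +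
        (X 0 2 + X 2 0)^2 + (X 1 2 + X 2 1)^2 := by
      linear_combination (2 : ℝ) * K0 + 2 * K1 - 2 * K2 - R0 - R1 - R2
    nlinarith [sq_nonneg (1 + X 2 2 - X 0 0 - X 1 1), sq_nonneg (X 1 0 - X 0 1),
      sq_nonneg (X 0 2 + X 2 0), sq_nonneg (X 1 2 + X 2 1), key]
  rw [Matrix.trace_fin_three]
  fin_cases i
  · exact h0
  · exact h1
  · exact h2

set_option maxHeartbeats 1000000 in
theorem trace_eigen_bounds (A X : Matrix (Fin 3) (Fin 3) ℝ)
    (hA : Aᵀ = A) (hH : (barM A).IsHermitian) (hPD : (barM A).PosDef)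
    (hX : Xᵀ * X = 1) (hdet : X.det = 1) :
    4 * (⨅ i, hH.eigenvalues i) * ((1 - X).trace / 4) ≤ (A * (1 - X)).trace ∧
      (A * (1 - X)).trace ≤ 4 * (⨆ i, hH.eigenvalues i) * ((1 - X).trace / 4) := by
  classical
  set lam := hH.eigenvalues with hlam
  set U : Matrix (Fin 3) (Fin 3) ℝ := (hH.eigenvectorUnitary : Matrix (Fin 3) (Fin 3) ℝ)
    with hUdef
  have hUmem := hH.eigenvectorUnitary.2
  rw [Unitary.mem_iff] at hUmem
  have hstarU : star U = Uᵀ := by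
    rw [Matrix.star_eq_conjTranspose, Matrix.conjTranspose_eq_transpose_of_trivial]
  have hU1 : Uᵀ * U = 1 := by rw [← hstarU]; exact hUmem.1
  have hU2 : U * Uᵀ = 1 := by rw [← hstarU]; exact hUmem.2
  have hspec : barM A = U * Matrix.diagonal lam * Uᵀ := by
    have h := hH.spectral_theorem
    rwa [Unitary.conjStarAlgAut_apply, ← hUdef, hstarU] at h
  set Y : Matrix (Fin 3) (Fin 3) ℝ := Uᵀ * X * U with hYdef
  have hYorth : Yᵀ * Y = 1 := by
    have hYt : Yᵀ = Uᵀ * Xᵀ * U := by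
      rw [hYdef, Matrix.transpose_mul, Matrix.transpose_mul, Matrix.transpose_transpose,
        Matrix.mul_assoc]
    rw [hYt, hYdef]
    calc Uᵀ * Xᵀ * U * (Uᵀ * X * U)
        = Uᵀ * (Xᵀ * ((U * Uᵀ) * X)) * U := by
          simp only [Matrix.mul_assoc]
      _ = 1 := by
          rw [hU2, Matrix.one_mul, hX, Matrix.mul_one, hU1]
  have hdetU : U.det * U.det = 1 := by
    have h : (U * Uᵀ).det = (1 : Matrix (Fin 3) (Fin 3) ℝ).det := by rw [hU2]
    rwa [Matrix.det_mul, Matrix.det_transpose, Matrix.det_one] at h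
  have hYdet : Y.det = 1 := by
    rw [hYdef, Matrix.det_mul, Matrix.det_mul, Matrix.det_transpose, hdet]
    linarith [hdetU]
  have hc : ∀ i, 0 ≤ 1 + 2 * Y i i - Y.trace := so3_diag_nonneg Y hYorth hYdet
  have htrY : Y.trace = Y 0 0 + Y 1 1 + Y 2 2 := Matrix.trace_fin_three Y
  have hc' : ∀ i, 0 ≤ 1 + 2 * Y i i - (Y 0 0 + Y 1 1 + Y 2 2) := by
    intro i; have h := hc i; rwa [htrY] at h
  have htrXY : X.trace = Y.trace := by
    rw [hYdef, Matrix.trace_mul_cycle, hU2, Matrix.one_mul]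
  have hBtr : (barM A * (1 - X)).trace =
      lam 0 * (1 - Y 0 0) + lam 1 * (1 - Y 1 1) + lam 2 * (1 - Y 2 2) := by
    have e1 : Uᵀ * (1 - X) * U = 1 - Y := by
      rw [Matrix.mul_sub, Matrix.mul_one, Matrix.sub_mul, hU1, hYdef]
    have e2 : (barM A * (1 - X)).trace = (Matrix.diagonal lam * (1 - Y)).trace := by
      rw [hspec, ← e1]
      calc (U * Matrix.diagonal lam * Uᵀ * (1 - X)).trace
          = ((U * Matrix.diagonal lam) * (Uᵀ * (1 - X))).trace := by
            rw [Matrix.mul_assoc]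
        _ = ((Uᵀ * (1 - X)) * (U * Matrix.diagonal lam)).trace :=
            Matrix.trace_mul_comm _ _
        _ = ((Uᵀ * (1 - X) * U) * Matrix.diagonal lam).trace := by
            rw [← Matrix.mul_assoc]
        _ = (Matrix.diagonal lam * (Uᵀ * (1 - X) * U)).trace :=
            Matrix.trace_mul_comm _ _
    rw [e2, Matrix.trace_fin_three]
    simp [Matrix.mul_apply, Matrix.diagonal_apply, Fin.sum_univ_three, Matrix.sub_apply,
      Matrix.one_apply]
  have hAeq : A = A.trace • (1 : Matrix (Fin 3) (Fin 3) ℝ) - (2 : ℝ) • barM A := by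
    rw [barM]
    module
  have hmain : (A * (1 - X)).trace = A.trace * (1 - X).trace - 2 * (barM A * (1 - X)).trace := by
    calc (A * (1 - X)).trace
        = ((A.trace • (1 : Matrix (Fin 3) (Fin 3) ℝ) - (2 : ℝ) • barM A) * (1 - X)).trace := by
          rw [← hAeq]
      _ = A.trace * (1 - X).trace - 2 * (barM A * (1 - X)).trace := by
          rw [Matrix.sub_mul, Matrix.smul_mul, Matrix.smul_mul, Matrix.one_mul,
            Matrix.trace_sub, Matrix.trace_smul, Matrix.trace_smul, smul_eq_mul, smul_eq_mul]
  have hsum : lam 0 + lam 1 + lam 2 = A.trace := by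
    have h1 : (barM A).trace = A.trace := by
      rw [barM, Matrix.trace_smul, Matrix.trace_sub, Matrix.trace_smul, Matrix.trace_one]
      simp
      ring
    have h2 : (barM A).trace = lam 0 + lam 1 + lam 2 := by
      rw [hspec, Matrix.trace_mul_comm, ← Matrix.mul_assoc, hU1, Matrix.one_mul,
        Matrix.trace_fin_three]
      simp [Matrix.diagonal_apply]
    linarith
  have htr1X : (1 - X).trace = 3 - (Y 0 0 + Y 1 1 + Y 2 2) := by
    rw [Matrix.trace_sub, Matrix.trace_one, htrXY, htrY]
    norm_num
  constructor
  · have hm : ∀ i, (⨅ j, lam j) ≤ lam i := fun i => ciInf_le (Finite.bddBelow_range _) i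
    rw [hmain, hBtr, htr1X, ← hsum]
    nlinarith [mul_nonneg (sub_nonneg.mpr (hm 0)) (hc' 0),
      mul_nonneg (sub_nonneg.mpr (hm 1)) (hc' 1),
      mul_nonneg (sub_nonneg.mpr (hm 2)) (hc' 2)]
  · have hm : ∀ i, lam i ≤ ⨆ j, lam j := fun i => le_ciSup (Finite.bddAbove_range _) i
    rw [hmain, hBtr, htr1X, ← hsum]
    nlinarith [mul_nonneg (sub_nonneg.mpr (hm 0)) (hc' 0),
      mul_nonneg (sub_nonneg.mpr (hm 1)) (hc' 1),
      mul_nonneg (sub_nonneg.mpr (hm 2)) (hc' 2)]
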